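/- arXiv:2307.01305 — 3 statements merged into one kernel-verified Lean document; each statement's English description precedes it below -/
import Mathlib

section
/- Let P, M : ℝ → Mat(n,n,ℝ) be differentiable matrix-valued functions satisfying Ṗ + AᵀP + PA + Q + P(C Rₑ⁻¹ Cᵀ − B Rₚ⁻¹ Bᵀ)P = 0 and Ṁ + A₁ᵀM + MA₁ − P B Rₚ⁻¹ Bᵀ P − M C Rₑ⁻¹ Cᵀ M = 0, where A₁ = A + C Rₑ⁻¹ Cᵀ P. Assume P and M are symmetric-valued. Then Π := M − P satisfies the autonomous Riccati equation Π̇ + AᵀΠ + ΠA − Q − Π C Rₑ⁻¹ Cᵀ Π = 0. -/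
open Matrix

/-- `Π = M − P` satisfies the autonomous Riccati equation
`Π̇ + AᵀΠ + ΠA − Q − Π C Rₑ⁻¹ Cᵀ Π = 0`. -/
theorem stmt6 {n m k : ℕ}
    (A : Matrix (Fin n) (Fin n) ℝ) (B : Matrix (Fin n) (Fin m) ℝ)
    (C : Matrix (Fin n) (Fin k) ℝ) (Q : Matrix (Fin n) (Fin n) ℝ)
    (Rₚ : Matrix (Fin m) (Fin m) ℝ) (Rₑ : Matrix (Fin k) (Fin k) ℝ)
    (hQ : Q.IsSymm) (hRp : Rₚ.PosDef) (hRe : Rₑ.PosDef)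
    (hRpSymm : Rₚ.IsSymm) (hReSymm : Rₑ.IsSymm)
    (P P' M M' : ℝ → Matrix (Fin n) (Fin n) ℝ)
    (hPsym : ∀ t, (P t).IsSymm) (hMsym : ∀ t, (M t).IsSymm)
    (hP : ∀ t, ∀ i j, HasDerivAt (fun s => P s i j) (P' t i j) t)
    (hM : ∀ t, ∀ i j, HasDerivAt (fun s => M s i j) (M' t i j) t)
    (hPric : ∀ t, P' t + Aᵀ * P t + P t * A + Q
        + P t * (C * Rₑ⁻¹ * Cᵀ - B * Rₚ⁻¹ * Bᵀ) * P t = 0)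
    (hMric : ∀ t, M' t + (A + C * Rₑ⁻¹ * Cᵀ * P t)ᵀ * M t + M t * (A + C * Rₑ⁻¹ * Cᵀ * P t)
        - P t * B * Rₚ⁻¹ * Bᵀ * P t - M t * C * Rₑ⁻¹ * Cᵀ * M t = 0) :
    ∀ t, (∀ i j, HasDerivAt (fun s => (M s - P s) i j) ((M' t - P' t) i j) t)
      ∧ (M' t - P' t) + Aᵀ * (M t - P t) + (M t - P t) * A - Q
          - (M t - P t) * C * Rₑ⁻¹ * Cᵀ * (M t - P t) = 0 := by
  intro t
  have hRe' : (Rₑ⁻¹)ᵀ = Rₑ⁻¹ := by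
    rw [Matrix.transpose_nonsing_inv, hReSymm.eq]
  constructor
  · intro i j
    exact (hM t i j).sub (hP t i j)
  · have key : (M' t - P' t) + Aᵀ * (M t - P t) + (M t - P t) * A - Q
          - (M t - P t) * C * Rₑ⁻¹ * Cᵀ * (M t - P t)
        = (M' t + (A + C * Rₑ⁻¹ * Cᵀ * P t)ᵀ * M t + M t * (A + C * Rₑ⁻¹ * Cᵀ * P t)
            - P t * B * Rₚ⁻¹ * Bᵀ * P t - M t * C * Rₑ⁻¹ * Cᵀ * M t)
          - (P' t + Aᵀ * P t + P t * A + Q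
            + P t * (C * Rₑ⁻¹ * Cᵀ - B * Rₚ⁻¹ * Bᵀ) * P t) := by
      simp only [Matrix.transpose_add, Matrix.transpose_mul, hRe', (hPsym t).eq,
        Matrix.transpose_transpose, Matrix.sub_mul, Matrix.mul_sub, Matrix.mul_add,
        Matrix.add_mul, Matrix.mul_assoc]
      abel
    rw [hMric t, hPric t] at key
    simpa using key
end

section
/- Under the hypotheses of the previous statement (e(a)=0, ė = A₁e + Cw, M solves the Riccati equation with M(b)=0 and no escape time on [a,b]), the supremum over continuous w of ∫ₐᵇ (eᵀ S e − wᵀ Rₑ w) dt equals 0, and it is attained by w ≡ 0 (which yields e ≡ 0). -/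
open Matrix

lemma shift1 {m l : ℕ} (A : Matrix (Fin m) (Fin l) ℝ) (x : Fin l → ℝ) (y : Fin m → ℝ) :
    (A *ᵥ x) ⬝ᵥ y = x ⬝ᵥ (Aᵀ *ᵥ y) := by
  rw [Matrix.dotProduct_mulVec, Matrix.vecMul_transpose]

lemma key {n k : ℕ} (A M S : Matrix (Fin n) (Fin n) ℝ) (R : Matrix (Fin k) (Fin k) ℝ)
    (C : Matrix (Fin n) (Fin k) ℝ) (e : Fin n → ℝ) (w : Fin k → ℝ)
    (hMs : Mᵀ = M) (hRs : Rᵀ = R) (hRinv : R * R⁻¹ = 1) :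
    (A *ᵥ e + C *ᵥ w) ⬝ᵥ (M *ᵥ e) + e ⬝ᵥ ((S + M*C*R⁻¹*Cᵀ*M - Aᵀ*M - M*A) *ᵥ e)
      + e ⬝ᵥ (M *ᵥ (A *ᵥ e + C *ᵥ w))
    = (e ⬝ᵥ (S *ᵥ e) - w ⬝ᵥ (R *ᵥ w))
      + (w + R⁻¹ *ᵥ (Cᵀ *ᵥ (M *ᵥ e))) ⬝ᵥ (R *ᵥ (w + R⁻¹ *ᵥ (Cᵀ *ᵥ (M *ᵥ e)))) := by
  set v : Fin k → ℝ := R⁻¹ *ᵥ (Cᵀ *ᵥ (M *ᵥ e)) with hv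
  have hRv : R *ᵥ v = Cᵀ *ᵥ (M *ᵥ e) := by
    rw [hv, Matrix.mulVec_mulVec, hRinv, Matrix.one_mulVec]
  have h1 : (A *ᵥ e) ⬝ᵥ (M *ᵥ e) = e ⬝ᵥ ((Aᵀ*M) *ᵥ e) := by
    rw [shift1, Matrix.mulVec_mulVec]
  have h2 : (C *ᵥ w) ⬝ᵥ (M *ᵥ e) = w ⬝ᵥ (R *ᵥ v) := by
    rw [hRv, shift1]
  have h3 : e ⬝ᵥ (M *ᵥ (A *ᵥ e)) = e ⬝ᵥ ((M*A) *ᵥ e) := by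
    rw [Matrix.mulVec_mulVec]
  have h4 : e ⬝ᵥ (M *ᵥ (C *ᵥ w)) = v ⬝ᵥ (R *ᵥ w) := by
    rw [dotProduct_comm e, shift1, hMs, shift1, ← hRv,
      dotProduct_comm w, shift1, hRs]
  have h5 : e ⬝ᵥ ((M*C*R⁻¹*Cᵀ*M) *ᵥ e) = v ⬝ᵥ (R *ᵥ v) := by
    have h : (M*C*R⁻¹*Cᵀ*M) *ᵥ e = M *ᵥ (C *ᵥ v) := by
      rw [hv]; simp [Matrix.mulVec_mulVec, Matrix.mul_assoc]
    rw [h, dotProduct_comm e, shift1, hMs, shift1, ← hRv]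
  simp only [Matrix.add_mulVec, Matrix.sub_mulVec, Matrix.mulVec_add, dotProduct_add,
    add_dotProduct, dotProduct_sub]
  rw [h1, h2, h3, h4, h5]
  ring

lemma hasDerivAt_quad {n : ℕ} (Mf : ℝ → Matrix (Fin n) (Fin n) ℝ) (M' : Matrix (Fin n) (Fin n) ℝ)
    (ef : ℝ → Fin n → ℝ) (e' : Fin n → ℝ) (t : ℝ)
    (hM : ∀ i j, HasDerivAt (fun s => Mf s i j) (M' i j) t)
    (he : ∀ i, HasDerivAt (fun s => ef s i) (e' i) t) :
    HasDerivAt (fun s => ef s ⬝ᵥ (Mf s *ᵥ ef s))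
      (e' ⬝ᵥ (Mf t *ᵥ ef t) + ef t ⬝ᵥ (M' *ᵥ ef t) + ef t ⬝ᵥ (Mf t *ᵥ e')) t := by
  have h : ∀ i ∈ Finset.univ, HasDerivAt (fun s => ef s i * ∑ j, Mf s i j * ef s j)
      (e' i * ∑ j, Mf t i j * ef t j +
        ef t i * ∑ j, (M' i j * ef t j + Mf t i j * e' j)) t := fun i _ =>
    (he i).mul (HasDerivAt.fun_sum fun j _ => (hM i j).mul (he j))
  have h2 := HasDerivAt.fun_sum h
  have hfun : (fun s => ef s ⬝ᵥ (Mf s *ᵥ ef s)) =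
      (fun s => ∑ i, ef s i * ∑ j, Mf s i j * ef s j) := by
    funext s; simp [dotProduct, mulVec]
  rw [hfun]
  refine (HasDerivAt.congr_deriv h2 ?_)
  simp [dotProduct, mulVec, Finset.sum_add_distrib, Finset.mul_sum, mul_add]
  ring

lemma contOn_dot {k : ℕ} (x y : ℝ → Fin k → ℝ) (s : Set ℝ)
    (hx : ∀ i, ContinuousOn (fun t => x t i) s) (hy : ∀ i, ContinuousOn (fun t => y t i) s) :
    ContinuousOn (fun t => x t ⬝ᵥ y t) s := by
  simp only [dotProduct]
  exact continuousOn_finset_sum _ fun i _ => (hx i).mul (hy i)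

lemma contOn_mulVec {m l : ℕ} (A : Matrix (Fin m) (Fin l) ℝ) (x : ℝ → Fin l → ℝ) (s : Set ℝ)
    (hx : ∀ i, ContinuousOn (fun t => x t i) s) (i : Fin m) :
    ContinuousOn (fun t => (A *ᵥ x t) i) s := by
  simp only [mulVec, dotProduct]
  exact continuousOn_finset_sum _ fun j _ => continuousOn_const.mul (hx j)

lemma contOn_mulVec' {m l : ℕ} (A : ℝ → Matrix (Fin m) (Fin l) ℝ) (x : ℝ → Fin l → ℝ) (s : Set ℝ)
    (hA : ∀ i j, ContinuousOn (fun t => A t i j) s)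
    (hx : ∀ i, ContinuousOn (fun t => x t i) s) (i : Fin m) :
    ContinuousOn (fun t => (A t *ᵥ x t) i) s := by
  simp only [mulVec, dotProduct]
  exact continuousOn_finset_sum _ fun j _ => (hA i j).mul (hx j)

/-- the supremum over continuous deviations `w` of the deviation cost
is `0`, attained by `w ≡ 0`. -/
theorem stmt10 {n k : ℕ} (a b : ℝ) (hab : a ≤ b)
    (A₁ : ℝ → Matrix (Fin n) (Fin n) ℝ) (C : Matrix (Fin n) (Fin k) ℝ)
    (Rₑ : Matrix (Fin k) (Fin k) ℝ) (S : ℝ → Matrix (Fin n) (Fin n) ℝ)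
    (M M' : ℝ → Matrix (Fin n) (Fin n) ℝ)
    (hA₁ : ∀ i j, Continuous fun t => A₁ t i j)
    (hS : ∀ i j, Continuous fun t => S t i j)
    (hSsym : ∀ t, (S t).PosSemidef)
    (hRe : Rₑ.PosDef) (hReSymm : Rₑ.IsSymm)
    (hMsym : ∀ t, (M t).IsSymm)
    (hM : ∀ t ∈ Set.Icc a b, ∀ i j, HasDerivAt (fun s => M s i j) (M' t i j) t)
    (hMric : ∀ t ∈ Set.Icc a b,
      M' t + (A₁ t)ᵀ * M t + M t * A₁ t - S t - M t * C * Rₑ⁻¹ * Cᵀ * M t = 0)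
    (hMb : M b = 0) :
    IsGreatest {J : ℝ | ∃ w : ℝ → Fin k → ℝ, ∃ e : ℝ → Fin n → ℝ,
        (∀ i, Continuous fun t => w t i) ∧ e a = 0 ∧
        (∀ t ∈ Set.Icc a b, ∀ i,
          HasDerivAt (fun s => e s i) ((A₁ t *ᵥ e t + C *ᵥ w t) i) t) ∧
        J = ∫ t in a..b, (e t ⬝ᵥ (S t *ᵥ e t) - w t ⬝ᵥ (Rₑ *ᵥ w t))} 0 := by
  have hRinv : Rₑ * Rₑ⁻¹ = 1 :=
    Matrix.mul_nonsing_inv Rₑ (isUnit_iff_ne_zero.2 hRe.det_pos.ne')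
  constructor
  · -- membership: w ≡ 0, e ≡ 0
    refine ⟨fun _ => 0, fun _ => 0, fun i => continuous_const, rfl, ?_, ?_⟩
    · intro t ht i
      have : ((A₁ t *ᵥ (0 : Fin n → ℝ) + C *ᵥ (0 : Fin k → ℝ)) i) = 0 := by simp
      rw [this]
      exact hasDerivAt_const t 0
    · simp
  · -- upper bound
    rintro J ⟨w, e, hw, hea, hede, hJ⟩
    set I : Set ℝ := Set.Icc a b with hI
    -- continuity facts on I
    have hce : ∀ i, ContinuousOn (fun t => e t i) I := fun i t ht =>
      (hede t ht i).continuousAt.continuousWithinAt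
    have hcM : ∀ i j, ContinuousOn (fun t => M t i j) I := fun i j t ht =>
      (hM t ht i j).continuousAt.continuousWithinAt
    have hcw : ∀ i, ContinuousOn (fun t => w t i) I := fun i => (hw i).continuousOn
    -- the quadratic storage function
    set v : ℝ → Fin k → ℝ := fun t => Rₑ⁻¹ *ᵥ (Cᵀ *ᵥ (M t *ᵥ e t)) with hvdef
    set base : ℝ → ℝ := fun t => e t ⬝ᵥ (S t *ᵥ e t) - w t ⬝ᵥ (Rₑ *ᵥ w t) with hbase
    set pos : ℝ → ℝ := fun t => (w t + v t) ⬝ᵥ (Rₑ *ᵥ (w t + v t)) with hpos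
    have hcv : ∀ i, ContinuousOn (fun t => v t i) I := by
      intro i
      exact contOn_mulVec Rₑ⁻¹ _ I (fun j => contOn_mulVec Cᵀ _ I
        (fun l => contOn_mulVec' M e I hcM hce l) j) i
    have hcbase : ContinuousOn base I := by
      apply ContinuousOn.sub
      · exact contOn_dot _ _ _ hce (fun i => contOn_mulVec' S e I
          (fun i j => (hS i j).continuousOn) hce i)
      · exact contOn_dot _ _ _ hcw (contOn_mulVec Rₑ w I hcw)
    have hcpos : ContinuousOn pos I := by
      have hsum : ∀ i, ContinuousOn (fun t => w t i + v t i) I := fun i =>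
        (hcw i).add (hcv i)
      exact contOn_dot _ _ _ hsum (contOn_mulVec Rₑ _ I hsum)
    -- derivative of the storage function
    have hderiv : ∀ t ∈ I, HasDerivAt (fun s => e s ⬝ᵥ (M s *ᵥ e s)) (base t + pos t) t := by
      intro t ht
      have hd := hasDerivAt_quad M (M' t) e (A₁ t *ᵥ e t + C *ᵥ w t) t
        (hM t ht) (hede t ht)
      have hric : M' t = S t + M t * C * Rₑ⁻¹ * Cᵀ * M t - (A₁ t)ᵀ * M t - M t * A₁ t := by
        have h := hMric t ht
        rw [← sub_eq_zero, ← h]; abel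
      have hk := key (A₁ t) (M t) (S t) Rₑ C (e t) (w t) (hMsym t) hReSymm hRinv
      rw [hric] at hd
      rw [hbase, hpos, hvdef]
      convert hd using 1
      exact hk.symm
    -- integrability
    have hIuIcc : Set.uIcc a b = I := Set.uIcc_of_le hab
    have hbint : IntervalIntegrable base MeasureTheory.volume a b :=
      (hIuIcc ▸ hcbase).intervalIntegrable
    have hpint : IntervalIntegrable pos MeasureTheory.volume a b :=
      (hIuIcc ▸ hcpos).intervalIntegrable
    -- FTC
    have hftc : (∫ t in a..b, (base t + pos t)) =
        (fun s => e s ⬝ᵥ (M s *ᵥ e s)) b - (fun s => e s ⬝ᵥ (M s *ᵥ e s)) a := by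
      apply intervalIntegral.integral_eq_sub_of_hasDerivAt
      · intro t ht
        exact hderiv t (hIuIcc ▸ ht)
      · exact hbint.add hpint
    have hzero : (∫ t in a..b, (base t + pos t)) = 0 := by
      rw [hftc]
      simp [hMb, hea]
    have hsplit : (∫ t in a..b, (base t + pos t)) =
        (∫ t in a..b, base t) + (∫ t in a..b, pos t) :=
      intervalIntegral.integral_add hbint hpint
    have hposnn : 0 ≤ ∫ t in a..b, pos t := by
      apply intervalIntegral.integral_nonneg hab
      intro u hu
      have := hRe.posSemidef.dotProduct_mulVec_nonneg (w u + v u)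
      simpa [hpos] using this
    have hJbase : J = ∫ t in a..b, base t := hJ
    simp only [Set.mem_setOf_eq] at *
    rw [hJbase]
    linarith [hzero, hsplit, hposnn]
end

section
/- Let P : [t₀, t_f] → Mat(n,n,ℝ) be a symmetric solution of Ṗ + AᵀP + PA + Q + P(C Rₑ⁻¹ Cᵀ − B Rₚ⁻¹ Bᵀ)P = 0, P(t_f) = Q_f. Let x : [t₀, t_f] → ℝⁿ satisfy ẋ = Ax + B u_p + C u_e. Then the payoff ∫_{t₀}^{t_f} (xᵀQx + u_pᵀRₚu_p − u_eᵀRₑu_e) dt + x(t_f)ᵀQ_f x(t_f) equals x(t₀)ᵀP(t₀)x(t₀) + ∫_{t₀}^{t_f} ‖u_p + Rₚ⁻¹BᵀPx‖²_{Rₚ} dt − ∫_{t₀}^{t_f} ‖u_e − Rₑ⁻¹CᵀPx‖²_{Rₑ} dt. -/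
open Matrix

lemma dotmv {a b : Type*} [Fintype a] [Fintype b] (M : Matrix a b ℝ) (v : b → ℝ) (w : a → ℝ) :
    (M *ᵥ v) ⬝ᵥ w = v ⬝ᵥ (Mᵀ *ᵥ w) := by
  rw [dotProduct_comm, dotProduct_mulVec, ← mulVec_transpose, dotProduct_comm]

lemma aux_quad {n m k : ℕ}
    (A : Matrix (Fin n) (Fin n) ℝ) (B : Matrix (Fin n) (Fin m) ℝ) (C : Matrix (Fin n) (Fin k) ℝ)
    (Q : Matrix (Fin n) (Fin n) ℝ) (Rₚ : Matrix (Fin m) (Fin m) ℝ) (Rₑ : Matrix (Fin k) (Fin k) ℝ)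
    (hRpSymm : Rₚ.IsSymm) (hReSymm : Rₑ.IsSymm)
    (hRpU : IsUnit Rₚ.det) (hReU : IsUnit Rₑ.det)
    (Pm P'm : Matrix (Fin n) (Fin n) ℝ) (hPs : Pm.IsSymm)
    (hric : P'm + Aᵀ * Pm + Pm * A + Q + Pm * (C * Rₑ⁻¹ * Cᵀ - B * Rₚ⁻¹ * Bᵀ) * Pm = 0)
    (v : Fin n → ℝ) (p : Fin m → ℝ) (e : Fin k → ℝ) :
    v ⬝ᵥ (Q *ᵥ v) + p ⬝ᵥ (Rₚ *ᵥ p) - e ⬝ᵥ (Rₑ *ᵥ e)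
    + ((A *ᵥ v + B *ᵥ p + C *ᵥ e) ⬝ᵥ (Pm *ᵥ v)
       + (v ⬝ᵥ (P'm *ᵥ v) + v ⬝ᵥ (Pm *ᵥ (A *ᵥ v + B *ᵥ p + C *ᵥ e))))
    = (p + (Rₚ⁻¹ * Bᵀ * Pm) *ᵥ v) ⬝ᵥ (Rₚ *ᵥ (p + (Rₚ⁻¹ * Bᵀ * Pm) *ᵥ v))
      - (e - (Rₑ⁻¹ * Cᵀ * Pm) *ᵥ v) ⬝ᵥ (Rₑ *ᵥ (e - (Rₑ⁻¹ * Cᵀ * Pm) *ᵥ v)) := by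
  have h0 : v ⬝ᵥ ((P'm + Aᵀ * Pm + Pm * A + Q
      + Pm * (C * Rₑ⁻¹ * Cᵀ - B * Rₚ⁻¹ * Bᵀ) * Pm) *ᵥ v) = (0:ℝ) := by
    rw [hric]; simp
  simp only [Matrix.mul_sub, Matrix.sub_mul, Matrix.mul_assoc, Matrix.add_mulVec,
    Matrix.sub_mulVec, Matrix.mulVec_add, Matrix.mulVec_sub, add_dotProduct, sub_dotProduct,
    dotProduct_add, dotProduct_sub, Matrix.mulVec_mulVec] at h0 ⊢
  simp only [dotmv, Matrix.transpose_mul, Matrix.transpose_transpose,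
    Matrix.transpose_nonsing_inv, hPs.eq, hRpSymm.eq, hReSymm.eq, Matrix.mulVec_mulVec,
    Matrix.mul_assoc] at *
  simp only [Matrix.mul_nonsing_inv_cancel_left _ _ hRpU, Matrix.mul_nonsing_inv_cancel_left _ _ hReU,
    Matrix.nonsing_inv_mul_cancel_left _ _ hRpU, Matrix.nonsing_inv_mul_cancel_left _ _ hReU,
    Matrix.nonsing_inv_mul _ hRpU, Matrix.nonsing_inv_mul _ hReU, Matrix.mul_one] at *
  linarith [h0]

lemma contOn_dot_s12 {a : Type*} [Fintype a] {s : Set ℝ} {f g : ℝ → a → ℝ}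
    (hf : ∀ i, ContinuousOn (fun t => f t i) s) (hg : ∀ i, ContinuousOn (fun t => g t i) s) :
    ContinuousOn (fun t => f t ⬝ᵥ g t) s := by
  simp only [dotProduct]
  exact continuousOn_finset_sum _ fun i _ => (hf i).mul (hg i)

lemma contOn_mulVec_s12 {a b : Type*} [Fintype a] [Fintype b] {s : Set ℝ}
    {M : ℝ → Matrix a b ℝ} {f : ℝ → b → ℝ}
    (hM : ∀ i j, ContinuousOn (fun t => M t i j) s) (hf : ∀ i, ContinuousOn (fun t => f t i) s) :
    ∀ i, ContinuousOn (fun t => (M t *ᵥ f t) i) s := by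
  intro i
  simp only [mulVec, dotProduct]
  exact continuousOn_finset_sum _ fun j _ => (hM i j).mul (hf j)

/-- completion-of-squares form of the payoff. -/
theorem stmt12 {n m k : ℕ} (t₀ t_f : ℝ) (h : t₀ ≤ t_f)
    (A : Matrix (Fin n) (Fin n) ℝ) (B : Matrix (Fin n) (Fin m) ℝ)
    (C : Matrix (Fin n) (Fin k) ℝ)
    (Q Q_f : Matrix (Fin n) (Fin n) ℝ)
    (Rₚ : Matrix (Fin m) (Fin m) ℝ) (Rₑ : Matrix (Fin k) (Fin k) ℝ)
    (hQ : Q.PosSemidef) (hQf : Q_f.PosSemidef) (hRp : Rₚ.PosDef) (hRe : Rₑ.PosDef)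
    (hRpSymm : Rₚ.IsSymm) (hReSymm : Rₑ.IsSymm)
    (P P' : ℝ → Matrix (Fin n) (Fin n) ℝ)
    (hPsym : ∀ t, (P t).IsSymm)
    (hP : ∀ t ∈ Set.Icc t₀ t_f, ∀ i j, HasDerivAt (fun s => P s i j) (P' t i j) t)
    (hPric : ∀ t ∈ Set.Icc t₀ t_f, P' t + Aᵀ * P t + P t * A + Q
        + P t * (C * Rₑ⁻¹ * Cᵀ - B * Rₚ⁻¹ * Bᵀ) * P t = 0)
    (hPtf : P t_f = Q_f)
    (x : ℝ → Fin n → ℝ) (u_p : ℝ → Fin m → ℝ) (u_e : ℝ → Fin k → ℝ)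
    (hup : ∀ i, Continuous fun t => u_p t i)
    (hue : ∀ i, Continuous fun t => u_e t i)
    (hx : ∀ t ∈ Set.Icc t₀ t_f, ∀ i,
      HasDerivAt (fun s => x s i) ((A *ᵥ x t + B *ᵥ u_p t + C *ᵥ u_e t) i) t) :
    (∫ t in t₀..t_f, (x t ⬝ᵥ (Q *ᵥ x t) + u_p t ⬝ᵥ (Rₚ *ᵥ u_p t)
        - u_e t ⬝ᵥ (Rₑ *ᵥ u_e t))) + x t_f ⬝ᵥ (Q_f *ᵥ x t_f)
    = x t₀ ⬝ᵥ (P t₀ *ᵥ x t₀)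
      + (∫ t in t₀..t_f, ((u_p t + (Rₚ⁻¹ * Bᵀ * P t) *ᵥ x t)
          ⬝ᵥ (Rₚ *ᵥ (u_p t + (Rₚ⁻¹ * Bᵀ * P t) *ᵥ x t))))
      - ∫ t in t₀..t_f, ((u_e t - (Rₑ⁻¹ * Cᵀ * P t) *ᵥ x t)
          ⬝ᵥ (Rₑ *ᵥ (u_e t - (Rₑ⁻¹ * Cᵀ * P t) *ᵥ x t))) := by
  have hRpU : IsUnit Rₚ.det := hRp.det_pos.ne'.isUnit
  have hReU : IsUnit Rₑ.det := hRe.det_pos.ne'.isUnit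
  set x' : ℝ → Fin n → ℝ := fun t => A *ᵥ x t + B *ᵥ u_p t + C *ᵥ u_e t with hx'def
  set f : ℝ → ℝ := fun t => x t ⬝ᵥ (Q *ᵥ x t) + u_p t ⬝ᵥ (Rₚ *ᵥ u_p t)
      - u_e t ⬝ᵥ (Rₑ *ᵥ u_e t) with hfdef
  set gp : ℝ → ℝ := fun t => (u_p t + (Rₚ⁻¹ * Bᵀ * P t) *ᵥ x t)
      ⬝ᵥ (Rₚ *ᵥ (u_p t + (Rₚ⁻¹ * Bᵀ * P t) *ᵥ x t)) with hgpdef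
  set ge : ℝ → ℝ := fun t => (u_e t - (Rₑ⁻¹ * Cᵀ * P t) *ᵥ x t)
      ⬝ᵥ (Rₑ *ᵥ (u_e t - (Rₑ⁻¹ * Cᵀ * P t) *ᵥ x t)) with hgedef
  set V : ℝ → ℝ := fun t => x t ⬝ᵥ (P t *ᵥ x t) with hVdef
  -- derivative of V
  have hD : ∀ t ∈ Set.Icc t₀ t_f, HasDerivAt V (gp t - ge t - f t) t := by
    intro t ht
    have hDt : HasDerivAt V
        (x' t ⬝ᵥ (P t *ᵥ x t) + (x t ⬝ᵥ (P' t *ᵥ x t) + x t ⬝ᵥ (P t *ᵥ x' t))) t := by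
      have hVeq : V = fun s => ∑ i : Fin n, ∑ j : Fin n, x s i * (P s i j * x s j) := by
        funext s; simp [hVdef, dotProduct, mulVec, Finset.mul_sum]
      rw [hVeq]
      have hsum := HasDerivAt.fun_sum (fun i (_ : i ∈ Finset.univ) =>
        HasDerivAt.fun_sum (fun j (_ : j ∈ Finset.univ) =>
          (hx t ht i).fun_mul ((hP t ht i j).fun_mul (hx t ht j))))
      refine hsum.congr_deriv ?_
      simp only [dotProduct, mulVec, Finset.mul_sum, Finset.sum_add_distrib, mul_add]
      rfl
    have hiden := aux_quad A B C Q Rₚ Rₑ hRpSymm hReSymm hRpU hReU (P t) (P' t)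
      (hPsym t) (hPric t ht) (x t) (u_p t) (u_e t)
    have : gp t - ge t - f t
        = x' t ⬝ᵥ (P t *ᵥ x t) + (x t ⬝ᵥ (P' t *ᵥ x t) + x t ⬝ᵥ (P t *ᵥ x' t)) := by
      simp only [hfdef, hgpdef, hgedef, hx'def]
      linarith [hiden]
    rw [this]
    exact hDt
  -- continuity
  have hxc : ∀ i, ContinuousOn (fun t => x t i) (Set.Icc t₀ t_f) :=
    fun i t ht => ((hx t ht i).continuousAt).continuousWithinAt
  have hPc : ∀ i j, ContinuousOn (fun t => P t i j) (Set.Icc t₀ t_f) :=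
    fun i j t ht => ((hP t ht i j).continuousAt).continuousWithinAt
  have hupc : ∀ i, ContinuousOn (fun t => u_p t i) (Set.Icc t₀ t_f) :=
    fun i => (hup i).continuousOn
  have huec : ∀ i, ContinuousOn (fun t => u_e t i) (Set.Icc t₀ t_f) :=
    fun i => (hue i).continuousOn
  have hfc : ContinuousOn f (Set.Icc t₀ t_f) := by
    rw [hfdef]
    exact ((contOn_dot_s12 hxc (contOn_mulVec_s12 (M := fun _ => Q) (fun i j => continuousOn_const) hxc)).add
        (contOn_dot_s12 hupc (contOn_mulVec_s12 (M := fun _ => Rₚ) (fun i j => continuousOn_const) hupc))).sub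
      (contOn_dot_s12 huec (contOn_mulVec_s12 (M := fun _ => Rₑ) (fun i j => continuousOn_const) huec))
  have hKpc : ∀ i, ContinuousOn (fun t => (u_p t + (Rₚ⁻¹ * Bᵀ * P t) *ᵥ x t) i)
      (Set.Icc t₀ t_f) := by
    intro i
    exact (hupc i).add (contOn_mulVec_s12 (fun i j => by
      have : (fun t => (Rₚ⁻¹ * Bᵀ * P t) i j) = fun t => ∑ l, (Rₚ⁻¹ * Bᵀ) i l * P t l j := by
        funext t; simp [Matrix.mul_apply]
      rw [this]
      exact continuousOn_finset_sum _ fun l _ => continuousOn_const.mul (hPc l j)) hxc i)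
  have hKec : ∀ i, ContinuousOn (fun t => (u_e t - (Rₑ⁻¹ * Cᵀ * P t) *ᵥ x t) i)
      (Set.Icc t₀ t_f) := by
    intro i
    exact (huec i).sub (contOn_mulVec_s12 (fun i j => by
      have : (fun t => (Rₑ⁻¹ * Cᵀ * P t) i j) = fun t => ∑ l, (Rₑ⁻¹ * Cᵀ) i l * P t l j := by
        funext t; simp [Matrix.mul_apply]
      rw [this]
      exact continuousOn_finset_sum _ fun l _ => continuousOn_const.mul (hPc l j)) hxc i)
  have hgpc : ContinuousOn gp (Set.Icc t₀ t_f) := by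
    rw [hgpdef]
    exact contOn_dot_s12 hKpc (contOn_mulVec_s12 (M := fun _ => Rₚ) (fun i j => continuousOn_const) hKpc)
  have hgec : ContinuousOn ge (Set.Icc t₀ t_f) := by
    rw [hgedef]
    exact contOn_dot_s12 hKec (contOn_mulVec_s12 (M := fun _ => Rₑ) (fun i j => continuousOn_const) hKec)
  have huIcc : Set.uIcc t₀ t_f = Set.Icc t₀ t_f := Set.uIcc_of_le h
  have hfint : IntervalIntegrable f MeasureTheory.volume t₀ t_f :=
    (hfc.mono (by rw [huIcc])).intervalIntegrable
  have hgpint : IntervalIntegrable gp MeasureTheory.volume t₀ t_f :=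
    (hgpc.mono (by rw [huIcc])).intervalIntegrable
  have hgeint : IntervalIntegrable ge MeasureTheory.volume t₀ t_f :=
    (hgec.mono (by rw [huIcc])).intervalIntegrable
  have key : ∫ t in t₀..t_f, (gp t - ge t - f t) = V t_f - V t₀ := by
    apply intervalIntegral.integral_eq_sub_of_hasDerivAt
    · intro t ht; exact hD t (huIcc ▸ ht)
    · exact (hgpint.sub hgeint).sub hfint
  rw [intervalIntegral.integral_sub (hgpint.sub hgeint) hfint,
    intervalIntegral.integral_sub hgpint hgeint] at key
  have hVtf : V t_f = x t_f ⬝ᵥ (Q_f *ᵥ x t_f) := by rw [hVdef]; simp [hPtf]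
  have hVt0 : V t₀ = x t₀ ⬝ᵥ (P t₀ *ᵥ x t₀) := rfl
  linarith [key]
end
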